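/- With w given by the explicit formula w(x,t) = w₀(x) e^{-∫₀ᵗ(v(x,r)-η)dr} / (1 + η w₀(x) ∫₀ᵗ e^{-∫₀ˢ(v(x,r)-η)dr} ds), where w₀ ≥ 0, v ≥ 0, η ≥ 0, one has the two-sided bound (w₀(x)/(1 + w₀(x)(e^{ηt}-1))) e^{-∫₀ᵗ(v(x,r)-η)dr} ≤ w(x,t) ≤ w₀(x) e^{-∫₀ᵗ(v(x,r)-η)dr}, and moreover 0 ≤ w(x,t) ≤ max{1, w₀(x)}. -/
import Mathlib

open MeasureTheory Real Set

theorem stmt2 {X : Type*} (T η : ℝ) (hT : 0 < T) (hη : 0 ≤ η)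
    (w v : X → ℝ → ℝ) (w₀ : X → ℝ)
    (hvpos : ∀ x t, 0 ≤ v x t) (hw0 : ∀ x, 0 ≤ w₀ x)
    (hv : ∀ x, Continuous (v x))
    (hw : ∀ x, ∀ t ∈ Set.Ico (0:ℝ) T,
      w x t = w₀ x * Real.exp (-∫ r in (0:ℝ)..t, (v x r - η)) /
        (1 + η * w₀ x * ∫ s in (0:ℝ)..t, Real.exp (-∫ r in (0:ℝ)..s, (v x r - η)))) :
    ∀ x, ∀ t ∈ Set.Ico (0:ℝ) T,
      (w₀ x / (1 + w₀ x * (Real.exp (η * t) - 1))) *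
          Real.exp (-∫ r in (0:ℝ)..t, (v x r - η)) ≤ w x t ∧
      w x t ≤ w₀ x * Real.exp (-∫ r in (0:ℝ)..t, (v x r - η)) ∧
      0 ≤ w x t ∧ w x t ≤ max 1 (w₀ x) := by
  intro x t ht
  obtain ⟨ht0, htT⟩ := ht
  set V : ℝ → ℝ := fun s => ∫ r in (0:ℝ)..s, v x r with hVdef
  have hvi : ∀ a b : ℝ, IntervalIntegrable (v x) volume a b :=
    fun a b => (hv x).intervalIntegrable a b
  have hVcont : Continuous V := intervalIntegral.continuous_primitive hvi 0
  have hsub : ∀ s : ℝ, (∫ r in (0:ℝ)..s, (v x r - η)) = V s - η * s := by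
    intro s
    rw [intervalIntegral.integral_sub (hvi 0 s) intervalIntegrable_const,
      intervalIntegral.integral_const]
    simp [hVdef, smul_eq_mul]
    ring
  have hVmono : ∀ s ∈ Set.Icc (0:ℝ) t, V s ≤ V t := by
    intro s hs
    have h1 : V t = V s + ∫ r in s..t, v x r :=
      (intervalIntegral.integral_add_adjacent_intervals (hvi 0 s) (hvi s t)).symm
    have h2 : 0 ≤ ∫ r in s..t, v x r :=
      intervalIntegral.integral_nonneg hs.2 (fun r _ => hvpos x r)
    linarith
  have hV0 : ∀ s, 0 ≤ s → 0 ≤ V s := fun s hs =>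
    intervalIntegral.integral_nonneg hs (fun r _ => hvpos x r)
  set A := ∫ s in (0:ℝ)..t, Real.exp (-∫ r in (0:ℝ)..s, (v x r - η)) with hAdef
  have hA' : A = ∫ s in (0:ℝ)..t, Real.exp (η * s - V s) := by
    rw [hAdef]
    refine intervalIntegral.integral_congr fun s _ => ?_
    rw [hsub]; congr 1; ring
  have hfcont : Continuous fun s => Real.exp (η * s - V s) :=
    Real.continuous_exp.comp ((continuous_const.mul continuous_id).sub hVcont)
  have hecont : Continuous fun s : ℝ => Real.exp (η * s) :=
    Real.continuous_exp.comp (continuous_const.mul continuous_id)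
  set I := ∫ s in (0:ℝ)..t, Real.exp (η * s) with hIdef
  have hIeq : η * I = Real.exp (η * t) - 1 := by
    have hd : ∀ s ∈ Set.uIcc (0:ℝ) t, HasDerivAt (fun s => Real.exp (η * s))
        (η * Real.exp (η * s)) s := by
      intro s _
      simpa [mul_comm] using ((hasDerivAt_id s).const_mul η).exp
    have h := intervalIntegral.integral_eq_sub_of_hasDerivAt hd
      ((continuous_const.mul hecont).intervalIntegrable 0 t)
    rw [intervalIntegral.integral_const_mul] at h
    simpa [hIdef] using h
  have hAub : A ≤ I := by
    rw [hA', hIdef]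
    refine intervalIntegral.integral_mono_on ht0 (hfcont.intervalIntegrable 0 t)
      (hecont.intervalIntegrable 0 t) fun s hs => ?_
    exact Real.exp_le_exp.mpr (by have := hV0 s hs.1; linarith)
  have hAlb : Real.exp (-(V t)) * I ≤ A := by
    rw [hA', hIdef, ← intervalIntegral.integral_const_mul]
    refine intervalIntegral.integral_mono_on ht0
      ((continuous_const.mul hecont).intervalIntegrable 0 t)
      (hfcont.intervalIntegrable 0 t) fun s hs => ?_
    rw [← Real.exp_add]
    exact Real.exp_le_exp.mpr (by have := hVmono s hs; linarith)
  have hEt1 : (1:ℝ) ≤ Real.exp (η * t) := Real.one_le_exp (mul_nonneg hη ht0)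
  have heV1 : Real.exp (-(V t)) ≤ 1 := Real.exp_le_one_iff.mpr (by have := hV0 t ht0; linarith)
  have heVpos : (0:ℝ) < Real.exp (-(V t)) := Real.exp_pos _
  have hIpos : 0 ≤ I := by
    rw [hIdef]
    exact intervalIntegral.integral_nonneg ht0 fun s _ => (Real.exp_pos _).le
  set Et := Real.exp (η * t) with hEtdef
  set u := w₀ x * Real.exp (-(V t)) with hudef
  have hu0 : 0 ≤ u := mul_nonneg (hw0 x) heVpos.le
  have huw : u ≤ w₀ x := by nlinarith [hw0 x]
  have hηA_ub : η * A ≤ Et - 1 := by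
    have := mul_le_mul_of_nonneg_left hAub hη
    linarith [hIeq]
  have hηA_lb : Real.exp (-(V t)) * (Et - 1) ≤ η * A := by
    have := mul_le_mul_of_nonneg_left hAlb hη
    nlinarith [hIeq]
  set D := 1 + η * w₀ x * A with hDdef
  have hD_ub : D ≤ 1 + w₀ x * (Et - 1) := by
    have := mul_le_mul_of_nonneg_left hηA_ub (hw0 x)
    rw [hDdef]; nlinarith
  have hD_lb : 1 + u * (Et - 1) ≤ D := by
    have := mul_le_mul_of_nonneg_left hηA_lb (hw0 x)
    rw [hDdef, hudef]; nlinarith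
  have hDu_pos : (0:ℝ) < 1 + u * (Et - 1) := by nlinarith
  have hD_pos : (0:ℝ) < D := lt_of_lt_of_le hDu_pos hD_lb
  have hD1 : (1:ℝ) ≤ D := by nlinarith
  have hEexp : Real.exp (-∫ r in (0:ℝ)..t, (v x r - η)) = Et * Real.exp (-(V t)) := by
    rw [hsub, hEtdef, ← Real.exp_add]
    congr 1; ring
  have hwt : w x t = w₀ x * Real.exp (-∫ r in (0:ℝ)..t, (v x r - η)) / D := by
    rw [hw x t ⟨ht0, htT⟩]
  set E := Real.exp (-∫ r in (0:ℝ)..t, (v x r - η)) with hEdef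
  have hEpos : 0 < E := Real.exp_pos _
  refine ⟨?_, ?_, ?_, ?_⟩
  · rw [hwt, div_mul_eq_mul_div]
    gcongr
    exact mul_nonneg (hw0 x) hEpos.le
  · rw [hwt]
    exact div_le_self (mul_nonneg (hw0 x) hEpos.le) hD1
  · rw [hwt]
    exact div_nonneg (mul_nonneg (hw0 x) hEpos.le) hD_pos.le
  · rw [hwt, hEexp]
    have hkey : w₀ x * (Et * Real.exp (-(V t))) / D = u * Et / D := by
      rw [hudef]; ring_nf
    rw [hkey]
    rcases le_total u 1 with hu1 | hu1
    · refine le_trans ?_ (le_max_left 1 (w₀ x))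
      rw [div_le_one hD_pos]
      have h3 : 1 + u * (Et - 1) - u * Et = 1 - u := by ring
      linarith
    · refine le_trans ?_ (le_max_right 1 (w₀ x))
      refine le_trans ?_ huw
      rw [div_le_iff₀ hD_pos]
      have h1 := mul_le_mul_of_nonneg_left hD_lb hu0
      have h2 : 0 ≤ u * (Et - 1) * (u - 1) :=
        mul_nonneg (mul_nonneg hu0 (sub_nonneg.mpr hEt1)) (sub_nonneg.mpr hu1)
      have h3 : u * (1 + u * (Et - 1)) - u * Et = u * (Et - 1) * (u - 1) := by ring
      linarith
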